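/- Let 1/2 < H < 1 and θ > 1. Then the triple integral Σ := ∫_{[0,∞)^3} e^{−θy} e^{−θ|z−x|} e^{(1 − 1/H)(x+y+z)} ( |e^{−y/H} − e^{−x/H}| · |1 − e^{−z/H}| )^{2H−2} dx dy dz is finite. (2Σ, up to the normalizing factor θ^2 / (H^2 B((θ−1)H+1, 2H−1)^2), is the asymptotic variance σ^2(θ,H) appearing in the central limit theorem for the least squares estimator of the drift of the fractional Ornstein–Uhlenbeck process of the second kind, valid for the whole range H ∈ (1/2,1).) -/

import Mathlib

open MeasureTheory Real Set

lemma integrable_comp_abs' {f : ℝ → ℝ} (hf : IntegrableOn (fun x => f |x|) (Ioi 0)) :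
    Integrable fun x : ℝ => f |x| := by
  have int_Iic : IntegrableOn (fun x ↦ f |x|) (Iic 0) := by
    rw [← Measure.map_neg_eq_self (volume : Measure ℝ)]
    have m : MeasurableEmbedding fun x : ℝ => -x := (Homeomorph.neg ℝ).measurableEmbedding
    rw [m.integrableOn_map_iff]
    simp_rw [Function.comp_def, abs_neg, neg_preimage, neg_Iic, neg_zero]
    exact Iff.mpr integrableOn_Ici_iff_integrableOn_Ioi hf
  rw [← integrableOn_univ, ← Iic_union_Ioi (a := (0:ℝ))]
  exact int_Iic.union hf

lemma integrable_exp_neg_abs' {b : ℝ} (hb : 0 < b) :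
    Integrable fun x : ℝ => exp (-b * |x|) := by
  exact integrable_comp_abs' (f := fun x => exp (-b * x))
    ((exp_neg_integrableOn_Ioi 0 hb).congr_fun
      (fun x hx => by simp [abs_of_pos (show (0:ℝ) < x from hx)]) measurableSet_Ioi)

noncomputable def psi (a : ℝ) : ℝ → ℝ := (Ioc (0:ℝ) 1).indicator fun u => u ^ a

lemma psi_nonneg (a u : ℝ) : 0 ≤ psi a u :=
  indicator_nonneg (fun x hx => rpow_nonneg hx.1.le _) u

lemma psi_integrable {a : ℝ} (ha : -1 < a) : Integrable (psi a) := by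
  refine IntegrableOn.integrable_indicator ?_ measurableSet_Ioc
  rw [← intervalIntegrable_iff_integrableOn_Ioc_of_le zero_le_one]
  exact intervalIntegral.intervalIntegrable_rpow' ha

lemma psi_abs_integrable {a : ℝ} (ha : -1 < a) : Integrable (fun u : ℝ => psi a |u|) := by
  apply integrable_comp_abs' (f := psi a)
  exact ((psi_integrable ha).integrableOn).congr_fun
    (fun x hx => by rw [abs_of_pos hx]) measurableSet_Ioi

lemma key2 {a : ℝ} (ha : a < 0) (e u : ℝ) (he : 0 ≤ e) (he1 : e ≤ 1) :
    e * (1 + |u| ^ a) ≤ 2 * e + psi a |u| := by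
  have hpsi := psi_nonneg a |u|
  rcases eq_or_ne u 0 with rfl | hu
  · simp only [abs_zero, zero_rpow ha.ne] at *
    linarith
  rcases le_or_gt |u| 1 with h1 | h1
  · have hm : |u| ∈ Ioc (0:ℝ) 1 := ⟨abs_pos.mpr hu, h1⟩
    have hmem : psi a |u| = |u| ^ a := by simp [psi, indicator_of_mem hm]
    have hua : 0 ≤ |u| ^ a := rpow_nonneg (abs_nonneg u) a
    nlinarith
  · have h2 : |u| ^ a ≤ 1 := rpow_le_one_of_one_le_of_nonpos h1.le ha.le
    nlinarith

lemma one_sub_exp_lb {b : ℝ} (hb : 0 < b) {u : ℝ} (hu : 0 < u) :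
    (1 - exp (-b)) * min u 1 ≤ 1 - exp (-b * u) := by
  rcases le_total 1 u with h | h
  · rw [min_eq_right h, mul_one]
    have : exp (-b * u) ≤ exp (-b) := exp_le_exp.2 (by nlinarith)
    linarith
  · rw [min_eq_left h]
    have hcvx := convexOn_exp.2 (mem_univ (-b)) (mem_univ (0:ℝ)) hu.le
      (by linarith : (0:ℝ) ≤ 1 - u) (by ring)
    simp only [smul_eq_mul, mul_zero, add_zero, exp_zero, mul_one] at hcvx
    have : exp (-b * u) ≤ u * exp (-b) + (1 - u) := by
      rw [mul_comm (-b) u] at *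
      linarith [hcvx]
    nlinarith

lemma L2 {b a : ℝ} (hb : 0 < b) (ha0 : a < 0) {u : ℝ} (hu : 0 < u) :
    (1 - exp (-b * u)) ^ a ≤ (1 - exp (-b)) ^ a * (1 + u ^ a) := by
  set c := 1 - exp (-b) with hc
  have hc0 : 0 < c := by
    have : exp (-b) < 1 := exp_lt_one_iff.mpr (by linarith)
    simp [hc]; linarith
  have hmin : 0 < min u 1 := lt_min hu one_pos
  have h1 : (1 - exp (-b * u)) ^ a ≤ (c * min u 1) ^ a :=
    rpow_le_rpow_of_nonpos (by positivity) (one_sub_exp_lb hb hu) ha0.le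
  have h2 : (c * min u 1) ^ a = c ^ a * (min u 1) ^ a := mul_rpow hc0.le hmin.le
  have h3 : (min u 1) ^ a ≤ 1 + u ^ a := by
    rcases le_total u 1 with h | h
    · rw [min_eq_left h]; linarith
    · rw [min_eq_right h, one_rpow]
      have : 0 ≤ u ^ a := rpow_nonneg hu.le a
      linarith
  calc (1 - exp (-b * u)) ^ a ≤ c ^ a * (min u 1) ^ a := by rw [← h2]; exact h1
    _ ≤ c ^ a * (1 + u ^ a) := by
        have : 0 ≤ c ^ a := rpow_nonneg hc0.le a
        nlinarith

lemma abs_exp_sub_exp {b : ℝ} (hb : 0 < b) (x y : ℝ) :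
    |exp (-b * y) - exp (-b * x)| = exp (-b * min x y) * (1 - exp (-b * |x - y|)) := by
  rcases le_total x y with h | h
  · rw [min_eq_left h, abs_of_nonpos (by linarith : x - y ≤ 0),
      abs_of_nonpos (sub_nonpos.mpr (exp_le_exp.2 (by nlinarith : -b * y ≤ -b * x))),
      mul_sub, mul_one, ← exp_add, show -b * x + -b * -(x - y) = -b * y by ring]
    ring
  · rw [min_eq_right h, abs_of_nonneg (by linarith : (0:ℝ) ≤ x - y),
      abs_of_nonneg (sub_nonneg.mpr (exp_le_exp.2 (by nlinarith : -b * x ≤ -b * y))),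
      mul_sub, mul_one, ← exp_add, show -b * y + -b * (x - y) = -b * x by ring]

lemma pointwise_bound {H θ : ℝ} (hH1 : 1 / 2 < H) (hH2 : H < 1) (hθ : 0 < θ)
    {x y z : ℝ} (hx : 0 < x) (hy : 0 < y) (hz : 0 < z) :
    exp (-θ * y) * exp (-θ * |z - x|) * exp ((1 - 1 / H) * (x + y + z)) *
      (|exp (-y / H) - exp (-x / H)| * |1 - exp (-z / H)|) ^ (2 * H - 2) ≤
    ((1 - exp (-(1/H))) ^ (2*H-2) * (1 - exp (-(1/H))) ^ (2*H-2)) * exp (-θ * y) *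
      (exp (-θ * |x - z|) * (1 + |x - y| ^ (2*H-2))) *
      (exp (-(1/H - 1) * z) * (1 + z ^ (2*H-2))) := by
  have hH0 : 0 < H := by linarith
  set b : ℝ := 1/H with hbdef
  set α : ℝ := 2*H - 2 with hadef
  set β : ℝ := b - 1 with hβdef
  set c : ℝ := 1 - exp (-b) with hcdef
  have hb : 0 < b := by positivity
  have hb1 : 1 < b := one_lt_one_div hH0 hH2
  have hβ : 0 < β := by simp [hβdef]; linarith
  have hα0 : α < 0 := by simp [hadef]; linarith
  have hc : 0 < c := by
    have : exp (-b) < 1 := exp_lt_one_iff.mpr (by linarith)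
    simp [hcdef]; linarith
  have hca : 0 ≤ c ^ α := rpow_nonneg hc.le α
  rw [show -y/H = -b*y by rw [hbdef]; ring, show -x/H = -b*x by rw [hbdef]; ring,
    show -z/H = -b*z by rw [hbdef]; ring,
    show (1 - 1/H) * (x+y+z) = -β*(x+y+z) by rw [hβdef, hbdef]; ring,
    show (-(1/H - 1) : ℝ) = -β by rw [hβdef, hbdef],
    show (-(1/H) : ℝ) = -b by rw [hbdef]]
  rw [mul_rpow (abs_nonneg _) (abs_nonneg _)]
  have hz1 : exp (-b*z) ≤ 1 := exp_le_one_iff.mpr (by nlinarith)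
  rw [abs_of_nonneg (by linarith : (0:ℝ) ≤ 1 - exp (-b*z))]
  rcases eq_or_ne x y with rfl | hxy
  · rw [sub_self, abs_zero, zero_rpow hα0.ne, zero_mul, mul_zero]
    exact mul_nonneg (mul_nonneg (mul_nonneg (mul_nonneg hca hca) (exp_pos _).le)
      (by positivity)) (by positivity)
  · have hd : 0 < |x - y| := abs_pos.mpr (sub_ne_zero.mpr hxy)
    have hd1 : exp (-b*|x-y|) ≤ 1 := exp_le_one_iff.mpr (by nlinarith)
    rw [abs_exp_sub_exp hb x y,
      mul_rpow (exp_pos _).le (by linarith : (0:ℝ) ≤ 1 - exp (-b*|x-y|)), ← exp_mul]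
    have h2m : 2 * min x y ≤ x + y := by
      have := min_le_left x y; have := min_le_right x y; linarith
    have hba : -b * α = 2 * β := by
      rw [hadef, hβdef, hbdef]; field_simp; ring
    have hA1 : exp (-b * min x y * α) ≤ exp (β*(x+y)) := by
      apply exp_le_exp.2
      have heq : -b * min x y * α = 2*β*(min x y) := by linear_combination (min x y) * hba
      rw [heq]
      nlinarith [mul_le_mul_of_nonneg_left h2m hβ.le]
    have hA2 : (1 - exp (-b*|x-y|)) ^ α ≤ c ^ α * (1 + |x-y| ^ α) := L2 hb hα0 hd
    have hB : (1 - exp (-b*z)) ^ α ≤ c ^ α * (1 + z ^ α) := L2 hb hα0 hz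
    have n1 : (0:ℝ) ≤ (1 - exp (-b*|x-y|)) ^ α := rpow_nonneg (by linarith) α
    have n2 : (0:ℝ) ≤ (1 - exp (-b*z)) ^ α := rpow_nonneg (by linarith) α
    calc exp (-θ * y) * exp (-θ * |z - x|) * exp (-β * (x + y + z)) *
          (exp (-b * (min x y) * α) * (1 - exp (-b * |x - y|)) ^ α * (1 - exp (-b * z)) ^ α)
        = exp (-θ*y) * exp (-θ*|z-x|) * (exp (-β*(x+y+z)) * exp (-b*(min x y)*α)) *
            ((1-exp (-b*|x-y|))^α * (1-exp (-b*z))^α) := by ring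
      _ ≤ exp (-θ*y) * exp (-θ*|z-x|) * (exp (-β*(x+y+z)) * exp (β*(x+y))) *
            ((c^α*(1+|x-y|^α)) * (c^α*(1+z^α))) := by
          have m1 : exp (-β*(x+y+z)) * exp (-b*(min x y)*α) ≤ exp (-β*(x+y+z)) * exp (β*(x+y)) :=
            mul_le_mul_of_nonneg_left hA1 (exp_pos _).le
          have m2 : (1-exp (-b*|x-y|))^α * (1-exp (-b*z))^α ≤ (c^α*(1+|x-y|^α)) * (c^α*(1+z^α)) := by
            apply mul_le_mul hA2 hB n2
            positivity
          have m3 : (0:ℝ) ≤ exp (-θ*y) * exp (-θ*|z-x|) := by positivity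
          have m4 : (0:ℝ) ≤ (1-exp (-b*|x-y|))^α * (1-exp (-b*z))^α := mul_nonneg n1 n2
          calc exp (-θ*y) * exp (-θ*|z-x|) * (exp (-β*(x+y+z)) * exp (-b*(min x y)*α)) *
                ((1-exp (-b*|x-y|))^α * (1-exp (-b*z))^α)
              ≤ exp (-θ*y) * exp (-θ*|z-x|) * (exp (-β*(x+y+z)) * exp (β*(x+y))) *
                ((1-exp (-b*|x-y|))^α * (1-exp (-b*z))^α) := by
                apply mul_le_mul_of_nonneg_right _ m4
                exact mul_le_mul_of_nonneg_left m1 m3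
            _ ≤ _ := by
                apply mul_le_mul_of_nonneg_left m2
                positivity
      _ = c ^ α * c ^ α * exp (-θ*y) * (exp (-θ*|x-z|) * (1 + |x-y| ^ α)) *
            (exp (-β*z) * (1 + z ^ α)) := by
          rw [abs_sub_comm z x,
            show exp (-β*(x+y+z)) * exp (β*(x+y)) = exp (-β*z) by
              rw [← exp_add]; congr 1; ring]
          ring

lemma slice_bound {H θ : ℝ} (hH1 : 1 / 2 < H) (hH2 : H < 1) (hθ : 0 < θ) {x y z : ℝ}
    (hx : 0 < x) (hy : 0 < y) (hz : 0 < z) :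
    ‖exp (-θ * y) * exp (-θ * |z - x|) * exp ((1 - 1 / H) * (x + y + z)) *
      (|exp (-y / H) - exp (-x / H)| * |1 - exp (-z / H)|) ^ (2 * H - 2)‖ ≤
    ((1 - exp (-(1/H))) ^ (2*H-2) * (1 - exp (-(1/H))) ^ (2*H-2) * exp (-θ * y) *
      (exp (-(1/H - 1) * z) * (1 + z ^ (2*H-2)))) *
      (2 * exp (-θ * |x - z|) + psi (2*H-2) |x - y|) := by
  have hα0 : (2*H-2 : ℝ) < 0 := by linarith
  have hH0 : 0 < H := by linarith
  have hc : 0 < 1 - exp (-(1/H)) := by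
    have : exp (-(1/H)) < 1 := exp_lt_one_iff.mpr (neg_lt_zero.mpr (by positivity))
    linarith
  have hca : (0:ℝ) ≤ (1 - exp (-(1/H))) ^ (2*H-2) := rpow_nonneg hc.le _
  rw [Real.norm_eq_abs, abs_of_nonneg (by positivity)]
  refine (pointwise_bound hH1 hH2 hθ hx hy hz).trans ?_
  have hk := key2 hα0 (exp (-θ*|x-z|)) (x-y) (exp_pos _).le
    (exp_le_one_iff.mpr (by nlinarith [abs_nonneg (x - z), hθ.le]))
  have hnn : (0:ℝ) ≤ (1 - exp (-(1/H))) ^ (2*H-2) * (1 - exp (-(1/H))) ^ (2*H-2) *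
      exp (-θ * y) * (exp (-(1/H - 1) * z) * (1 + z ^ (2*H-2))) := by
    apply mul_nonneg (mul_nonneg (mul_nonneg hca hca) (exp_pos _).le)
    positivity
  calc (1 - exp (-(1/H))) ^ (2*H-2) * (1 - exp (-(1/H))) ^ (2*H-2) * exp (-θ * y) *
        (exp (-θ * |x - z|) * (1 + |x - y| ^ (2*H-2))) *
        (exp (-(1/H - 1) * z) * (1 + z ^ (2*H-2)))
      = ((1 - exp (-(1/H))) ^ (2*H-2) * (1 - exp (-(1/H))) ^ (2*H-2) * exp (-θ * y) *
          (exp (-(1/H - 1) * z) * (1 + z ^ (2*H-2)))) *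
        (exp (-θ * |x - z|) * (1 + |x - y| ^ (2*H-2))) := by ring
    _ ≤ ((1 - exp (-(1/H))) ^ (2*H-2) * (1 - exp (-(1/H))) ^ (2*H-2) * exp (-θ * y) *
          (exp (-(1/H - 1) * z) * (1 + z ^ (2*H-2)))) *
        (2 * exp (-θ * |x - z|) + psi (2*H-2) |x - y|) := by
        exact mul_le_mul_of_nonneg_left hk hnn


/-- For `1/2 < H < 1` and `θ > 1`, the triple integral
`Σ = ∫_{[0,∞)^3} e^{−θy} e^{−θ|z−x|} e^{(1−1/H)(x+y+z)}
(|e^{−y/H} − e^{−x/H}| |1 − e^{−z/H}|)^{2H−2} dx dy dz` is finite.  (Up to the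
normalizing factor `θ²/(H² B((θ−1)H+1,2H−1)²)`, `2Σ` is the asymptotic variance
`σ²(θ,H)` in the central limit theorem for the least squares estimator of the
drift of the fractional Ornstein–Uhlenbeck process of the second kind, valid for
the whole range `H ∈ (1/2,1)`.) -/
theorem fou2_asymptotic_variance_finite
    (H θ : ℝ) (hH1 : 1 / 2 < H) (hH2 : H < 1) (hθ : 1 < θ) :
    IntegrableOn
      (fun p : ℝ × ℝ × ℝ =>
        exp (-θ * p.2.1) * exp (-θ * |p.2.2 - p.1|) *
          exp ((1 - 1 / H) * (p.1 + p.2.1 + p.2.2)) *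
          (|exp (-p.2.1 / H) - exp (-p.1 / H)| * |1 - exp (-p.2.2 / H)|) ^ (2 * H - 2))
      (Set.Ioi (0:ℝ) ×ˢ Set.Ioi (0:ℝ) ×ˢ Set.Ioi (0:ℝ)) := by
  have hH0 : 0 < H := by linarith
  have hθ0 : 0 < θ := by linarith
  have hα1 : (-1:ℝ) < 2*H-2 := by linarith
  have hα0 : (2*H-2:ℝ) < 0 := by linarith
  have hβ : (0:ℝ) < 1/H - 1 := by
    have := one_lt_one_div hH0 hH2; linarith
  set μ1 : Measure ℝ := volume.restrict (Set.Ioi 0) with hμ1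
  set f : ℝ × ℝ × ℝ → ℝ := fun p =>
        exp (-θ * p.2.1) * exp (-θ * |p.2.2 - p.1|) *
          exp ((1 - 1 / H) * (p.1 + p.2.1 + p.2.2)) *
          (|exp (-p.2.1 / H) - exp (-p.1 / H)| * |1 - exp (-p.2.2 / H)|) ^ (2 * H - 2)
    with hfdef
  have hfm : Measurable f := by fun_prop
  have hmeq : (volume : Measure (ℝ × ℝ × ℝ)).restrict
      (Set.Ioi (0:ℝ) ×ˢ Set.Ioi (0:ℝ) ×ˢ Set.Ioi (0:ℝ)) = μ1.prod (μ1.prod μ1) := by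
    rw [Measure.volume_eq_prod, ← Measure.prod_restrict]
    congr 1
    rw [Measure.volume_eq_prod, ← Measure.prod_restrict]
  rw [IntegrableOn, hmeq]
  have hqae : ∀ᵐ q ∂(μ1.prod μ1), q ∈ Set.Ioi (0:ℝ) ×ˢ Set.Ioi (0:ℝ) := by
    rw [hμ1, Measure.prod_restrict, ← Measure.volume_eq_prod]
    exact ae_restrict_mem (measurableSet_Ioi.prod measurableSet_Ioi)
  -- dominating slice function
  have hDint : ∀ y z : ℝ, Integrable
      (fun x : ℝ => 2 * exp (-θ*|x - z|) + psi (2*H-2) |x - y|) volume := by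
    intro y z
    exact (((integrable_exp_neg_abs' hθ0).comp_sub_right z).const_mul 2).add
      ((psi_abs_integrable hα1).comp_sub_right y)
  refine (integrable_prod_iff' hfm.aestronglyMeasurable).2 ⟨?_, ?_⟩
  · filter_upwards [hqae] with q hq
    obtain ⟨hqy, hqz⟩ := hq
    apply Integrable.mono'
      (((hDint q.1 q.2).integrableOn).const_mul
        ((1 - exp (-(1/H))) ^ (2*H-2) * (1 - exp (-(1/H))) ^ (2*H-2) * exp (-θ * q.1) *
          (exp (-(1/H - 1) * q.2) * (1 + q.2 ^ (2*H-2)))))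
    · exact (hfm.comp measurable_prodMk_right).aestronglyMeasurable
    · filter_upwards [ae_restrict_mem measurableSet_Ioi] with x hx
      exact slice_bound hH1 hH2 hθ0 hx hqy hqz
  · apply Integrable.mono'
      (g := fun q : ℝ × ℝ =>
        ((1 - exp (-(1/H))) ^ (2*H-2) * (1 - exp (-(1/H))) ^ (2*H-2) *
          (2 * (∫ x : ℝ, exp (-θ*|x|)) + ∫ x : ℝ, psi (2*H-2) |x|)) *
        (exp (-θ * q.1) * (exp (-(1/H - 1) * q.2) * (1 + q.2 ^ (2*H-2)))))
    · have hyint : Integrable (fun y => exp (-θ*y)) μ1 := exp_neg_integrableOn_Ioi 0 hθ0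
      have hzint : Integrable (fun z => exp (-(1/H-1)*z) * (1 + z ^ (2*H-2))) μ1 := by
        have h1 : IntegrableOn (fun z : ℝ => exp (-(1/H-1)*z)) (Set.Ioi 0) :=
          exp_neg_integrableOn_Ioi 0 hβ
        have h2 : IntegrableOn (fun z : ℝ => z ^ (2*H-2) * exp (-(1/H-1)*z)) (Set.Ioi 0) :=
          (integrableOn_rpow_mul_exp_neg_mul_rpow hα1 zero_lt_one hβ).congr_fun
            (fun x _ => by beta_reduce; rw [Real.rpow_one]) measurableSet_Ioi
        refine (h1.add h2).congr ?_
        filter_upwards with z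
        simp only [Pi.add_apply]
        ring
      exact (hyint.mul_prod hzint).const_mul _
    · exact ((hfm.stronglyMeasurable.norm.integral_prod_left').aestronglyMeasurable)
    · filter_upwards [hqae] with q hq
      obtain ⟨hqy, hqz⟩ := hq
      rw [Real.norm_eq_abs, abs_of_nonneg (integral_nonneg fun x => norm_nonneg _)]
      set Kc : ℝ := (1 - exp (-(1/H))) ^ (2*H-2) * (1 - exp (-(1/H))) ^ (2*H-2) with hKc
      have hc : 0 < 1 - exp (-(1/H)) := by
        have : exp (-(1/H)) < 1 := exp_lt_one_iff.mpr (neg_lt_zero.mpr (by positivity))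
        linarith
      have hKc0 : 0 ≤ Kc := mul_nonneg (rpow_nonneg hc.le _) (rpow_nonneg hc.le _)
      have hconst0 : (0:ℝ) ≤ Kc * exp (-θ * q.1) *
          (exp (-(1/H - 1) * q.2) * (1 + q.2 ^ (2*H-2))) := by
        apply mul_nonneg (mul_nonneg hKc0 (exp_pos _).le)
        have h2 : (0:ℝ) < q.2 := hqz
        have h3 := rpow_nonneg h2.le (2*H-2)
        nlinarith [(exp_pos (-(1/H - 1) * q.2)).le]
      calc ∫ x, ‖f (x, q)‖ ∂μ1
          ≤ ∫ x, (Kc * exp (-θ * q.1) * (exp (-(1/H - 1) * q.2) * (1 + q.2 ^ (2*H-2)))) *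
              (2 * exp (-θ*|x - q.2|) + psi (2*H-2) |x - q.1|) ∂μ1 := by
            apply integral_mono_of_nonneg (Filter.Eventually.of_forall fun x => norm_nonneg _)
              (((hDint q.1 q.2).integrableOn).const_mul _)
            filter_upwards [ae_restrict_mem measurableSet_Ioi] with x hx
            exact slice_bound hH1 hH2 hθ0 hx hqy hqz
        _ = (Kc * exp (-θ * q.1) * (exp (-(1/H - 1) * q.2) * (1 + q.2 ^ (2*H-2)))) *
              ∫ x, (2 * exp (-θ*|x - q.2|) + psi (2*H-2) |x - q.1|) ∂μ1 :=
            integral_const_mul _ _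
        _ ≤ (Kc * exp (-θ * q.1) * (exp (-(1/H - 1) * q.2) * (1 + q.2 ^ (2*H-2)))) *
              (2 * (∫ x : ℝ, exp (-θ*|x|)) + ∫ x : ℝ, psi (2*H-2) |x|) := by
            apply mul_le_mul_of_nonneg_left _ hconst0
            have hle : ∫ x, (2 * exp (-θ*|x - q.2|) + psi (2*H-2) |x - q.1|) ∂μ1 ≤
                ∫ x : ℝ, (2 * exp (-θ*|x - q.2|) + psi (2*H-2) |x - q.1|) := by
              apply setIntegral_le_integral (hDint q.1 q.2)
              filter_upwards with x
              have h1 := psi_nonneg (2*H-2) |x - q.1|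
              have h2 := (exp_pos (-θ*|x - q.2|)).le
              simp only [Pi.zero_apply]
              linarith
            refine hle.trans ?_
            have e1 : ∫ x : ℝ, exp (-θ*|x - q.2|) = ∫ x : ℝ, exp (-θ*|x|) := by
              simpa using integral_sub_right_eq_self (fun u : ℝ => exp (-θ*|u|)) q.2
            have e2 : (∫ x : ℝ, psi (2*H-2) |x - q.1|) = ∫ x : ℝ, psi (2*H-2) |x| := by
              simpa using integral_sub_right_eq_self (fun u : ℝ => psi (2*H-2) |u|) q.1
            rw [integral_add (((integrable_exp_neg_abs' hθ0).comp_sub_right q.2).const_mul 2)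
              ((psi_abs_integrable hα1).comp_sub_right q.1),
              integral_const_mul, e1, e2]
        _ = (Kc * (2 * (∫ x : ℝ, exp (-θ*|x|)) + ∫ x : ℝ, psi (2*H-2) |x|)) *
              (exp (-θ * q.1) * (exp (-(1/H - 1) * q.2) * (1 + q.2 ^ (2*H-2)))) := by ring
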